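/- Let (A, m) be a local noetherian ring, and let P^• and Q^• be two minimal bounded cochain complexes of finite free A-modules. If P^• and Q^• are quasi-isomorphic (i.e. isomorphic in the derived category), then P^• and Q^• are isomorphic as cochain complexes. -/

import Mathlib

open CategoryTheory Limits

universe u

section Defs

variable {A : Type u} [Ring A]

/-- The degreewise direct sum of a finite family of cochain complexes of modules. -/
noncomputable def sumComplex {s : ℕ} (G : Fin s → CochainComplex (ModuleCat.{u} A) ℤ) :
    CochainComplex (ModuleCat.{u} A) ℤ where
  X i := ModuleCat.of A (∀ j, (G j).X i)
  d i i' := ModuleCat.ofHom (LinearMap.pi fun j => ((G j).d i i').hom.comp (LinearMap.proj j))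
  shape i i' h := by
    apply ModuleCat.hom_ext
    apply LinearMap.ext
    intro v
    funext j
    simp [(G j).shape i i' h]
    rfl
  d_comp_d' i i' i'' _ _ := by
    apply ModuleCat.hom_ext
    apply LinearMap.ext
    intro v
    funext j
    simp
    rw [show ((G j).d i' i'').hom (((G j).d i i').hom (v j))
        = ((G j).d i i' ≫ (G j).d i' i'').hom (v j) from rfl, (G j).d_comp_d i i' i'']
    rfl

/-- A complex is supported in the interval `[a, b]` if it has trivial terms outside. -/
def SupportedIn (K : CochainComplex (ModuleCat.{u} A) ℤ) (a b : ℤ) : Prop :=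
  ∀ i : ℤ, (i < a ∨ b < i) → IsZero (K.X i)

/-- A perfect complex: a bounded cochain complex of finitely generated projective modules. -/
def IsPerfect (K : CochainComplex (ModuleCat.{u} A) ℤ) : Prop :=
  (∀ i : ℤ, Module.Finite A (K.X i) ∧ Module.Projective A (K.X i)) ∧
    ∃ a b : ℤ, SupportedIn K a b

/-- The complex has length at most `r`, i.e. it is supported in an interval `[a, a + r]`. -/
def LengthLE (K : CochainComplex (ModuleCat.{u} A) ℤ) (r : ℕ) : Prop :=
  ∃ a : ℤ, SupportedIn K a (a + r)

/-- Two complexes are quasi-isomorphic (isomorphic in the derived category) iff they are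
linked by a roof of quasi-isomorphisms. -/
def QuasiIsomorphic (K L : CochainComplex (ModuleCat.{u} A) ℤ) : Prop :=
  ∃ (Z : CochainComplex (ModuleCat.{u} A) ℤ) (f : Z ⟶ K) (g : Z ⟶ L),
    QuasiIso f ∧ QuasiIso g

end Defs

/-- A ring is strongly `r`-regular if every perfect complex is quasi-isomorphic to a finite
direct sum of perfect complexes of length at most `r`. -/
def IsStronglyRegularOfOrder (A : Type u) [Ring A] (r : ℕ) : Prop :=
  ∀ K : CochainComplex (ModuleCat.{u} A) ℤ, IsPerfect K →
    ∃ (s : ℕ) (G : Fin s → CochainComplex (ModuleCat.{u} A) ℤ),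
      (∀ j, IsPerfect (G j) ∧ LengthLE (G j) r) ∧ QuasiIsomorphic K (sumComplex G)

/-- A ring is strongly regular if it is strongly `r`-regular for some `r ≥ 0`. -/
def IsStronglyRegular (A : Type u) [Ring A] : Prop :=
  ∃ r : ℕ, IsStronglyRegularOfOrder A r

/-- A bounded complex of finite free modules over a local ring is minimal if its
differentials map into `m` times the target. -/
def IsMinimal {A : Type u} [CommRing A] [IsLocalRing A]
    (P : CochainComplex (ModuleCat.{u} A) ℤ) : Prop :=
  ∀ (i j : ℤ) (v : P.X i),
    P.d i j v ∈ (IsLocalRing.maximalIdeal A) • (⊤ : Submodule A (P.X j))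

/-- A bounded complex of finite free modules. -/
def IsFiniteFreeBounded {A : Type u} [Ring A] (P : CochainComplex (ModuleCat.{u} A) ℤ) : Prop :=
  (∀ i : ℤ, Module.Finite A (P.X i) ∧ Module.Free A (P.X i)) ∧ ∃ a b : ℤ, SupportedIn P a b


section Aux

open HomologicalComplex

variable {A : Type u} [Ring A] {P Z Y : CochainComplex (ModuleCat.{u} A) ℤ}

lemma Aux.capp {M N K : ModuleCat.{u} A} (f : M ⟶ N) (g : N ⟶ K) (x : M) :
    (f ≫ g) x = g (f x) := rfl

lemma Aux.addapp {M N : ModuleCat.{u} A} (f g h : M ⟶ N) (x : M) :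
    (f + g + h) x = f x + g x + h x := rfl

lemma Aux.dd (W : CochainComplex (ModuleCat.{u} A) ℤ) (a c e : ℤ) (x : W.X a) :
    W.d c e (W.d a c x) = 0 :=
  congrArg (fun g => g x) (W.d_comp_d a c e)

lemma Aux.fcomm {V W : CochainComplex (ModuleCat.{u} A) ℤ} (f : V ⟶ W) (i j : ℤ) (x : V.X i) :
    W.d i j (f.f i x) = f.f j (V.d i j x) :=
  congrArg (fun g => g x) (f.comm i j)

/-- Transport along equal degrees. -/
noncomputable def Aux.eY (Y : CochainComplex (ModuleCat.{u} A) ℤ) (i : ℤ) :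
    Y.X (i + 1 - 1) ⟶ Y.X i :=
  eqToHom (congrArg Y.X (by ring))

lemma Aux.eY_d (Y : CochainComplex (ModuleCat.{u} A) ℤ) {a a' : ℤ} (h : a = a') (j : ℤ)
    (w : Y.X a) : Y.d a' j (eqToHom (congrArg Y.X h) w) = Y.d a j w := by
  subst h; rfl

open Aux

lemma Aux.elem_boundary (s : Z ⟶ Y) [QuasiIso s] (m n k : ℤ) (hmn : m + 1 = n) (hnk : n + 1 = k)
    (z : Z.X n) (hz : Z.d n k z = 0) (y : Y.X m) (hy : Y.d m n y = s.f n z) :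
    ∃ z' : Z.X m, Z.d m n z' = z := by
  subst hmn hnk
  have hq : QuasiIsoAt s (m+1) := inferInstance
  rw [quasiIsoAt_iff' s m (m+1) (m+1+1) ((ComplexShape.up ℤ).prev_eq' (by simp))
    ((ComplexShape.up ℤ).next_eq' (by simp))] at hq
  set φ := (HomologicalComplex.shortComplexFunctor' (ModuleCat.{u} A) (ComplexShape.up ℤ) m (m+1) (m+1+1)).map s with hφ
  set S₁ := Z.sc' m (m+1) (m+1+1) with hS₁
  set S₂ := Y.sc' m (m+1) (m+1+1) with hS₂
  set h₁ := S₁.moduleCatLeftHomologyData with hh₁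
  set h₂ := S₂.moduleCatLeftHomologyData with hh₂
  have γ : ShortComplex.LeftHomologyMapData φ h₁ h₂ := default
  have hiso : IsIso γ.φH := (γ.quasiIso_iff).1 hq
  have hinj : Function.Injective γ.φH :=
    (ModuleCat.mono_iff_injective γ.φH).1 inferInstance
  have hzmem : z ∈ LinearMap.ker S₁.g.hom := hz
  set zc : h₁.K := ⟨z, hzmem⟩ with hzc
  have hφK : h₂.i (γ.φK zc) = s.f (m+1) z := congrArg (fun g => g zc) γ.commi
  have hcomm : γ.φH (h₁.π zc) = h₂.π (γ.φK zc) := congrArg (fun g => g zc) γ.commπ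
  have hKval : γ.φK zc = S₂.moduleCatToCycles y := by
    have hi : Function.Injective h₂.i := Subtype.val_injective
    apply hi
    rw [hφK]
    exact hy.symm
  have h0 : γ.φH (h₁.π zc) = 0 := by
    rw [hcomm, hKval]
    exact (Submodule.Quotient.mk_eq_zero _).2 (LinearMap.mem_range_self _ y)
  have hz0 : h₁.π zc = 0 := hinj (h0.trans (map_zero γ.φH.hom).symm)
  obtain ⟨x, hx⟩ := (Submodule.Quotient.mk_eq_zero _).1 hz0
  exact ⟨x, congrArg Subtype.val hx⟩

lemma Aux.elem_surj (s : Z ⟶ Y) [QuasiIso s] (m n k : ℤ) (hmn : m + 1 = n) (hnk : n + 1 = k)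
    (y : Y.X n) (hy : Y.d n k y = 0) :
    ∃ (z : Z.X n) (y' : Y.X m), Z.d n k z = 0 ∧ s.f n z + Y.d m n y' = y := by
  subst hmn hnk
  have hq : QuasiIsoAt s (m+1) := inferInstance
  rw [quasiIsoAt_iff' s m (m+1) (m+1+1) ((ComplexShape.up ℤ).prev_eq' (by simp))
    ((ComplexShape.up ℤ).next_eq' (by simp))] at hq
  set φ := (HomologicalComplex.shortComplexFunctor' (ModuleCat.{u} A) (ComplexShape.up ℤ) m (m+1) (m+1+1)).map s with hφ
  set S₁ := Z.sc' m (m+1) (m+1+1) with hS₁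
  set S₂ := Y.sc' m (m+1) (m+1+1) with hS₂
  set h₁ := S₁.moduleCatLeftHomologyData with hh₁
  set h₂ := S₂.moduleCatLeftHomologyData with hh₂
  have γ : ShortComplex.LeftHomologyMapData φ h₁ h₂ := default
  have hiso : IsIso γ.φH := (γ.quasiIso_iff).1 hq
  have hsurj : Function.Surjective γ.φH :=
    (ModuleCat.epi_iff_surjective γ.φH).1 inferInstance
  have hymem : y ∈ LinearMap.ker S₂.g.hom := hy
  set yc : h₂.K := ⟨y, hymem⟩ with hyc
  obtain ⟨cls, hcls⟩ := hsurj (h₂.π yc)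
  obtain ⟨zc, rfl⟩ := Submodule.mkQ_surjective _ cls
  have hcomm : γ.φH (h₁.π zc) = h₂.π (γ.φK zc) := congrArg (fun g => g zc) γ.commπ
  have hφK : h₂.i (γ.φK zc) = s.f (m+1) (h₁.i zc) := congrArg (fun g => g zc) γ.commi
  have hπ : h₂.π (γ.φK zc - yc) = 0 := by
    rw [map_sub, ← hcomm]
    rw [sub_eq_zero]
    exact hcls
  obtain ⟨x, hx⟩ := (Submodule.Quotient.mk_eq_zero _).1 hπ
  have hxval : Y.d m (m+1) x = s.f (m+1) (h₁.i zc) - y := by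
    have h6 : h₂.i (S₂.moduleCatToCycles x) = h₂.i (γ.φK zc - yc) := congrArg (fun w => h₂.i w) hx
    rw [map_sub, hφK] at h6
    exact h6
  refine ⟨h₁.i zc, -x, ?_, ?_⟩
  · exact zc.2
  · have hn : Y.d m (m+1) (-x) = -(Y.d m (m+1) x) := map_neg _ x
    rw [hn, hxval]; abel

variable (s : Z ⟶ Y) (φ : P ⟶ Y)

/-- The invariant for the inductive lifting construction. -/
def Aux.Good (i : ℤ) (p : (P.X i ⟶ Z.X i) × (P.X i ⟶ Y.X (i - 1)))
    (q : (P.X (i+1) ⟶ Z.X (i+1)) × (P.X (i+1) ⟶ Y.X (i+1-1))) : Prop :=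
  (∀ x, Z.d i (i+1) (p.1 x) = q.1 (P.d i (i+1) x)) ∧
  (∀ x, φ.f i x = s.f i (p.1 x) + Y.d (i-1) i (p.2 x) + eY Y i (q.2 (P.d i (i+1) x)))

lemma Aux.good_step (i : ℤ) [QuasiIso s]
    (q : (P.X (i+1) ⟶ Z.X (i+1)) × (P.X (i+1) ⟶ Y.X (i+1-1)))
    (r : (P.X (i+1+1) ⟶ Z.X (i+1+1)) × (P.X (i+1+1) ⟶ Y.X (i+1+1-1)))
    (hq : Good s φ (i+1) q r) (hproj : Module.Projective A (P.X i)) :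
    ∃ p, Good s φ i p q := by
  obtain ⟨hq1, hq2⟩ := hq
  set dP : P.X i →ₗ[A] P.X (i+1) := (P.d i (i+1)).hom with hdP
  set α : P.X i →ₗ[A] Z.X (i+1) :=
    LinearMap.comp q.1.hom dP with hα
  set β : P.X i →ₗ[A] Y.X i :=
    (φ.f i).hom -
      LinearMap.comp (eY Y i).hom
        (LinearMap.comp q.2.hom dP) with hβ
  set L : (Z.X (i+1) × Y.X i) →ₗ[A] (Z.X (i+1+1) × Y.X (i+1)) :=
    LinearMap.prod
      (LinearMap.comp (Z.d (i+1) (i+1+1)).hom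
        (LinearMap.fst A (Z.X (i+1)) (Y.X i)))
      (LinearMap.comp (s.f (i+1)).hom
        (LinearMap.fst A (Z.X (i+1)) (Y.X i)) -
       LinearMap.comp (Y.d i (i+1)).hom
        (LinearMap.snd A (Z.X (i+1)) (Y.X i))) with hL
  set T : Submodule A (Z.X (i+1) × Y.X i) := LinearMap.ker L with hT
  set θ₀ : (Z.X i × Y.X (i-1)) →ₗ[A] (Z.X (i+1) × Y.X i) :=
    LinearMap.prod
      (LinearMap.comp (Z.d i (i+1)).hom
        (LinearMap.fst A (Z.X i) (Y.X (i-1))))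
      (LinearMap.comp (s.f i).hom
        (LinearMap.fst A (Z.X i) (Y.X (i-1))) +
       LinearMap.comp (Y.d (i-1) i).hom
        (LinearMap.snd A (Z.X i) (Y.X (i-1)))) with hθ₀
  have hθmem : ∀ v, θ₀ v ∈ T := by
    rintro ⟨z', y'⟩
    show L (θ₀ (z', y')) = 0
    have h1 : Z.d (i+1) (i+1+1) (Z.d i (i+1) z') = 0 := dd Z i (i+1) (i+1+1) z'
    have h2 : s.f (i+1) (Z.d i (i+1) z') = Y.d i (i+1) (s.f i z') := (fcomm s i (i+1) z').symm
    have h3 : Y.d i (i+1) (Y.d (i-1) i y') = 0 := dd Y (i-1) i (i+1) y'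
    show (Z.d (i+1) (i+1+1) (Z.d i (i+1) z'),
      s.f (i+1) (Z.d i (i+1) z') - (Y.d i (i+1) (s.f i z' + Y.d (i-1) i y'))) = (0, 0)
    rw [h1, h2, map_add, h3]
    simp
  set θ : (Z.X i × Y.X (i-1)) →ₗ[A] T := LinearMap.codRestrict T θ₀ hθmem with hθ
  have hθsurj : Function.Surjective θ := by
    rintro ⟨⟨z, y⟩, hmem⟩
    have hmem' : L (z, y) = 0 := hmem
    have hm1 : Z.d (i+1) (i+1+1) z = 0 := congrArg Prod.fst hmem'
    have hm2 : s.f (i+1) z - Y.d i (i+1) y = 0 := congrArg Prod.snd hmem'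
    obtain ⟨z₀, hz₀⟩ := elem_boundary s i (i+1) (i+1+1) rfl rfl z hm1 y
      (by rw [sub_eq_zero] at hm2; exact hm2.symm)
    have hcyc : Y.d i (i+1) (y - s.f i z₀) = 0 := by
      have hm2' : s.f (i+1) z = Y.d i (i+1) y := sub_eq_zero.mp hm2
      rw [map_sub, fcomm s i (i+1) z₀, hz₀, hm2', sub_self]
    obtain ⟨w, y', hw0, hwsum⟩ := elem_surj s (i-1) i (i+1) (by ring) rfl (y - s.f i z₀) hcyc
    refine ⟨(z₀ + w, y'), ?_⟩
    apply Subtype.ext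
    show (Z.d i (i+1) (z₀ + w), s.f i (z₀ + w) + Y.d (i-1) i y') = (z, y)
    rw [map_add, hz₀, hw0, map_add]
    rw [Prod.mk.injEq]
    constructor
    · abel
    · rw [add_assoc, hwsum]; abel
  have hαβmem : ∀ x : P.X i, (α x, β x) ∈ T := by
    intro x
    have ha : Z.d (i+1) (i+1+1) (α x) = 0 := by
      show Z.d (i+1) (i+1+1) (q.1 (dP x)) = 0
      rw [hq1 (dP x), dd P i (i+1) (i+1+1) x, map_zero]
    have hb : s.f (i+1) (α x) - Y.d i (i+1) (β x) = 0 := by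
      have h5 := hq2 (dP x)
      have h6 : P.d (i+1) (i+1+1) (dP x) = 0 := dd P i (i+1) (i+1+1) x
      rw [h6, map_zero, map_zero, add_zero] at h5
      have h7 : Y.d i (i+1) (β x) =
          φ.f (i+1) (P.d i (i+1) x) - Y.d (i+1-1) (i+1) (q.2 (dP x)) := by
        show Y.d i (i+1) (φ.f i x - eY Y i (q.2 (dP x))) = _
        rw [map_sub, fcomm φ i (i+1) x, eY]
        rw [eY_d Y (show i + 1 - 1 = i by ring) (i+1) (q.2 (dP x))]
      have h8 : s.f (i+1) (α x) = φ.f (i+1) (dP x) - Y.d (i+1-1) (i+1) (q.2 (dP x)) := by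
        show s.f (i+1) (q.1 (dP x)) = _
        rw [eq_sub_iff_add_eq]
        exact h5.symm.trans (by abel)
      rw [h7, h8]
      show _ - _ = 0
      rw [sub_eq_zero]
    show L (α x, β x) = 0
    show (Z.d (i+1) (i+1+1) (α x), s.f (i+1) (α x) - Y.d i (i+1) (β x)) = (0, 0)
    rw [ha, hb]
  set g : P.X i →ₗ[A] T := LinearMap.codRestrict T (LinearMap.prod α β) hαβmem with hg
  obtain ⟨ℓ, hℓ⟩ := Module.projective_lifting_property θ g hθsurj
  have hℓ' : ∀ x : P.X i, (Z.d i (i+1) ((ℓ x).1), s.f i ((ℓ x).1) + Y.d (i-1) i ((ℓ x).2))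
      = (α x, β x) := by
    intro x
    have := congrArg (fun m => (m x : Z.X (i+1) × Y.X i)) hℓ
    exact this
  refine ⟨(ModuleCat.ofHom (LinearMap.comp (LinearMap.fst A (Z.X i) (Y.X (i-1))) ℓ : P.X i →ₗ[A] Z.X i),
      ModuleCat.ofHom (LinearMap.comp (LinearMap.snd A (Z.X i) (Y.X (i-1))) ℓ : P.X i →ₗ[A] Y.X (i-1))), ?_, ?_⟩
  · intro x
    show Z.d i (i+1) ((ℓ x).1) = q.1 (P.d i (i+1) x)
    exact congrArg Prod.fst (hℓ' x)
  · intro x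
    have h9 : s.f i ((ℓ x).1) + Y.d (i-1) i ((ℓ x).2) = β x := congrArg Prod.snd (hℓ' x)
    show φ.f i x = s.f i ((ℓ x).1) + Y.d (i-1) i ((ℓ x).2) + eY Y i (q.2 (P.d i (i+1) x))
    rw [h9]
    show φ.f i x = (φ.f i x - eY Y i (q.2 (dP x))) + eY Y i (q.2 (dP x))
    abel

variable (b : ℤ)

open scoped Classical in
noncomputable def Aux.liftMap : ∀ i : ℤ, (P.X i ⟶ Z.X i) × (P.X i ⟶ Y.X (i - 1)) := fun i =>
  if _ : b < i then 0
  else if H : ∃ p, Good s φ i p (liftMap (i+1)) then H.choose else 0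
termination_by i => (b + 1 - i).toNat
decreasing_by simp_wf; omega

lemma Aux.good_zero (i : ℤ) (hzero : IsZero (P.X i))
    (q : (P.X (i+1) ⟶ Z.X (i+1)) × (P.X (i+1) ⟶ Y.X (i+1-1))) :
    Good s φ i 0 q := by
  have hx0 : ∀ x : P.X i, x = 0 := by
    intro x
    have h := hzero.eq_of_src (𝟙 (P.X i)) 0
    have := congrArg (fun g => g x) h
    simpa using this
  constructor
  · intro x
    show Z.d i (i+1) ((0 : P.X i ⟶ Z.X i) x) = q.1 (P.d i (i+1) x)
    rw [hx0 x]
    simp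
  · intro x
    rw [hx0 x]
    simp

lemma Aux.good_lift [QuasiIso s] (hproj : ∀ i, Module.Projective A (P.X i))
    (hb : ∀ i, b < i → IsZero (P.X i)) :
    ∀ i : ℤ, Good s φ i (liftMap s φ b i) (liftMap s φ b (i+1)) := by
  intro i
  by_cases hbi : b < i
  · have h0 : liftMap s φ b i = 0 := by
      conv_lhs => rw [liftMap]
      rw [dif_pos hbi]
    rw [h0]
    exact good_zero s φ i (hb i hbi) _
  · have hnext := good_lift hproj hb (i+1)
    have H : ∃ p, Good s φ i p (liftMap s φ b (i+1)) :=
      good_step s φ i (liftMap s φ b (i+1)) (liftMap s φ b (i+1+1)) hnext (hproj i)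
    have h0 : liftMap s φ b i = H.choose := by
      conv_lhs => rw [liftMap]
      rw [dif_neg hbi, dif_pos H]
    rw [h0]
    exact H.choose_spec
termination_by i => (b + 1 - i).toNat
decreasing_by simp_wf; omega

lemma Aux.lift_lemma [QuasiIso s] (hproj : ∀ i, Module.Projective A (P.X i))
    (hb : ∀ i, b < i → IsZero (P.X i)) :
    ∃ ψ : P ⟶ Z, Nonempty (Homotopy (ψ ≫ s) φ) := by
  have hg := good_lift s φ b hproj hb
  refine ⟨{ f := fun i => (liftMap s φ b i).1, comm' := ?_ }, ⟨?_⟩⟩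
  · intro i j hij
    simp only [ComplexShape.up_Rel] at hij
    subst hij
    ext x
    exact (hg i).1 x
  · refine Homotopy.symm
      { hom := fun i j =>
          if h : i - 1 = j then (liftMap s φ b i).2 ≫ eqToHom (congrArg Y.X h) else 0
        zero := fun i j hij => dif_neg (by
          simp only [ComplexShape.up_Rel] at hij
          omega)
        comm := fun i => ?_ }
    rw [dNext_eq _ (show (ComplexShape.up ℤ).Rel i (i+1) by simp),
      prevD_eq _ (show (ComplexShape.up ℤ).Rel (i-1) i by simp)]
    rw [dif_pos (show i + 1 - 1 = i by ring), dif_pos (show i - 1 = i - 1 from rfl)]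
    ext x
    have h2 := (hg i).2 x
    simp only [eY] at h2
    show φ.f i x = _
    rw [addapp]
    simp only [capp, HomologicalComplex.comp_f, eqToHom_refl, ModuleCat.id_apply]
    rw [h2]
    abel

end Aux

section Aux2

open HomologicalComplex Aux

lemma Aux.map_mem_smul_top {A : Type u} [CommRing A] {M N : ModuleCat.{u} A} (I : Ideal A)
    (g : M ⟶ N) (x : M) (hx : x ∈ I • (⊤ : Submodule A M)) :
    g x ∈ I • (⊤ : Submodule A N) := by
  refine Submodule.smul_induction_on hx (fun a ha m _ => ?_) (fun y z hy hz => ?_)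
  · rw [map_smul]
    exact Submodule.smul_mem_smul ha Submodule.mem_top
  · rw [map_add]
    exact Submodule.add_mem _ hy hz

variable {A : Type u} [CommRing A] [IsLocalRing A] [IsNoetherianRing A]

lemma Aux.bij_of_homotopy_id (P : CochainComplex (ModuleCat.{u} A) ℤ)
    (hfin : ∀ i, Module.Finite A (P.X i)) (hmin : IsMinimal P)
    (e : P ⟶ P) (H : Homotopy e (𝟙 P)) (i : ℤ) :
    Function.Bijective (e.f i) := by
  have key : ∀ x : P.X i, e.f i x - x ∈
      (IsLocalRing.maximalIdeal A) • (⊤ : Submodule A (P.X i)) := by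
    intro x
    have hc := H.comm i
    rw [dNext_eq _ (show (ComplexShape.up ℤ).Rel i (i+1) by simp),
      prevD_eq _ (show (ComplexShape.up ℤ).Rel (i-1) i by simp)] at hc
    have hcx : e.f i x = H.hom (i+1) i (P.d i (i+1) x) + P.d (i-1) i (H.hom i (i-1) x) + x :=
      congrArg (fun g => g x) hc
    have h1 : H.hom (i+1) i (P.d i (i+1) x) ∈
        (IsLocalRing.maximalIdeal A) • (⊤ : Submodule A (P.X i)) :=
      map_mem_smul_top _ _ _ (hmin i (i+1) x)
    have h2 : P.d (i-1) i (H.hom i (i-1) x) ∈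
        (IsLocalRing.maximalIdeal A) • (⊤ : Submodule A (P.X i)) :=
      hmin (i-1) i _
    have heq : e.f i x - x = H.hom (i+1) i (P.d i (i+1) x) + P.d (i-1) i (H.hom i (i-1) x) := by
      rw [hcx]; abel
    rw [heq]
    exact Submodule.add_mem _ h1 h2
  have hsur : Function.Surjective (e.f i) := by
    have htop : (⊤ : Submodule A (P.X i)) ≤ LinearMap.range (e.f i).hom := by
      apply Submodule.le_of_le_smul_of_le_jacobson_bot (I := IsLocalRing.maximalIdeal A)
      · exact Module.finite_def.mp (hfin i)
      · rw [IsLocalRing.jacobson_eq_maximalIdeal ⊥ bot_ne_top]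
      · intro y _
        have hy : y = e.f i y - (e.f i y - y) := by abel
        rw [hy]
        exact Submodule.sub_mem _ (Submodule.mem_sup_left (LinearMap.mem_range_self _ y))
          (Submodule.mem_sup_right (key y))
    intro y
    exact htop Submodule.mem_top
  haveI := hfin i
  haveI : IsNoetherian A (P.X i) := isNoetherian_of_isNoetherianRing_of_finite A (P.X i)
  exact ⟨IsNoetherian.injective_of_surjective_endomorphism _ hsur, hsur⟩

end Aux2

/-- Over a local noetherian ring, two quasi-isomorphic minimal bounded
complexes of finite free modules are isomorphic as complexes. -/
theorem statement7 (A : Type u) [CommRing A] [IsLocalRing A] [IsNoetherianRing A]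
    (P Q : CochainComplex (ModuleCat.{u} A) ℤ)
    (hP : IsFiniteFreeBounded P) (hQ : IsFiniteFreeBounded Q)
    (hPmin : IsMinimal P) (hQmin : IsMinimal Q)
    (h : QuasiIsomorphic P Q) : Nonempty (P ≅ Q) := by
  open Aux HomologicalComplex in
  obtain ⟨⟨hPfree, aP, bP, hPsupp⟩, ⟨hQfree, aQ, bQ, hQsupp⟩⟩ := And.intro hP hQ
  have hprojP : ∀ i, Module.Projective A (P.X i) := fun i => by
    haveI := (hPfree i).2
    exact Module.Projective.of_free
  have hprojQ : ∀ i, Module.Projective A (Q.X i) := fun i => by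
    haveI := (hQfree i).2
    exact Module.Projective.of_free
  have hbP : ∀ i, bP < i → IsZero (P.X i) := fun i hi => hPsupp i (Or.inr hi)
  have hbQ : ∀ i, bQ < i → IsZero (Q.X i) := fun i hi => hQsupp i (Or.inr hi)
  obtain ⟨Z, f0, g0, hf0, hg0⟩ := h
  haveI := hf0
  haveI := hg0
  obtain ⟨u, ⟨hu⟩⟩ := Aux.lift_lemma f0 (𝟙 P) bP hprojP hbP
  haveI : QuasiIso (u ≫ f0) := by
    rw [quasiIso_iff]
    intro i
    rw [quasiIsoAt_iff_isIso_homologyMap, hu.homologyMap_eq, homologyMap_id]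
    infer_instance
  haveI : QuasiIso u := quasiIso_of_comp_right u f0
  set f : P ⟶ Q := u ≫ g0 with hf
  haveI : QuasiIso f := by rw [hf]; infer_instance
  obtain ⟨v, ⟨hv⟩⟩ := Aux.lift_lemma f (𝟙 Q) bQ hprojQ hbQ
  haveI : QuasiIso (v ≫ f) := by
    rw [quasiIso_iff]
    intro i
    rw [quasiIsoAt_iff_isIso_homologyMap, hv.homologyMap_eq, homologyMap_id]
    infer_instance
  haveI : QuasiIso v := quasiIso_of_comp_right v f
  obtain ⟨w, ⟨hw⟩⟩ := Aux.lift_lemma v (𝟙 P) bP hprojP hbP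
  -- f ≃ w, hence f ≫ v ≃ 𝟙 P
  have hfw : Homotopy f w :=
    ((hw.compRight f).trans (Homotopy.ofEq (Category.id_comp f))).symm.trans
      ((Homotopy.ofEq (Category.assoc w v f)).trans
        (((hv.compLeft w).trans (Homotopy.ofEq (Category.comp_id w)))))
  have hfv : Homotopy (f ≫ v) (𝟙 P) := (hfw.compRight v).trans hw
  have hbij1 : ∀ i, Function.Bijective ((f ≫ v).f i) :=
    Aux.bij_of_homotopy_id P (fun i => (hPfree i).1) hPmin (f ≫ v) hfv
  have hbij2 : ∀ i, Function.Bijective ((v ≫ f).f i) :=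
    Aux.bij_of_homotopy_id Q (fun i => (hQfree i).1) hQmin (v ≫ f) hv
  haveI : ∀ i, IsIso (f.f i) := by
    intro i
    have hinj : Function.Injective (f.f i) := by
      have h1 : Function.Injective (⇑(v.f i) ∘ ⇑(f.f i)) := (hbij1 i).1
      exact Function.Injective.of_comp h1
    have hsur : Function.Surjective (f.f i) := by
      have h1 : Function.Surjective (⇑(f.f i) ∘ ⇑(v.f i)) := (hbij2 i).2
      exact Function.Surjective.of_comp h1
    haveI : Mono (f.f i) := (ModuleCat.mono_iff_injective _).2 hinj
    haveI : Epi (f.f i) := (ModuleCat.epi_iff_surjective _).2 hsur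
    exact isIso_of_mono_of_epi _
  haveI : IsIso f := HomologicalComplex.Hom.isIso_of_components f
  exact ⟨asIso f⟩
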